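/- Let n ≥ 1, let K and L be real skew-symmetric n×n matrices, let S : ℝⁿ → ℝ be twice continuously differentiable with gradient ∇S, and let z : ℝ² → ℝⁿ be three times continuously differentiable and satisfy K z_t + L z_x = ∇S(z) at every point. Fix (x₀, t₀) ∈ ℝ². Then the local truncation residual of the simple diamond scheme, R(Δx, Δt) = K (z(x₀, t₀ + Δt/2) − z(x₀, t₀ − Δt/2))/Δt + L (z(x₀ + Δx/2, t₀) − z(x₀ − Δx/2, t₀))/Δx − ∇S( (z(x₀, t₀ + Δt/2) + z(x₀ + Δx/2, t₀) + z(x₀, t₀ − Δt/2) + z(x₀ − Δx/2, t₀))/4 ), satisfies ‖R(Δx, Δt)‖ = O(Δx² + Δt²) as (Δx, Δt) → (0, 0); that is, the simple diamond scheme has local truncation error of second order in space and time. -/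

import Mathlib

open Matrix Topology Asymptotics

set_option linter.unusedSectionVars false
set_option linter.unusedVariables false

section Aux

variable {E : Type*} [NormedAddCommGroup E] [NormedSpace ℝ E]


variable {E : Type*} [NormedAddCommGroup E] [NormedSpace ℝ E]

lemma taylor3_aux (φ : ℝ → E) (hφ : ContDiff ℝ 3 φ) (t : ℝ) :
    (fun h : ℝ => φ (t + h) - φ t - h • deriv φ t - (h ^ 2 / 2) • deriv (deriv φ) t)
      =O[𝓝 (0:ℝ)] fun h => h ^ 3 := by
  have h3 : ContDiff ℝ ((2:ℕ) + (1:ℕ) : ℕ) φ := by exact_mod_cast hφ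
  have hd1 : ContDiff ℝ 2 (deriv φ) := by
    have := ContDiff.iterate_deriv' 2 1 h3
    simpa using this
  have h2 : ContDiff ℝ ((1:ℕ) + (1:ℕ) : ℕ) (deriv φ) := by exact_mod_cast hd1
  have hd2 : ContDiff ℝ 1 (deriv (deriv φ)) := by
    have := ContDiff.iterate_deriv' 1 1 h2
    simpa using this
  have hφdiff : Differentiable ℝ φ := hφ.differentiable (by norm_num)
  have hd1diff : Differentiable ℝ (deriv φ) := hd1.differentiable (by norm_num)
  have hd2diff : Differentiable ℝ (deriv (deriv φ)) := hd2.differentiable (by norm_num)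
  have hadd : ∀ h : ℝ, HasDerivAt (fun h : ℝ => t + h) 1 h := by
    intro h; simpa using (hasDerivAt_id h).const_add t
  have hgA : ∀ h, HasDerivAt (fun h => φ (t + h)) (deriv φ (t + h)) h := by
    intro h
    have := HasDerivAt.scomp h ((hφdiff (t + h)).hasDerivAt) (hadd h)
    simp at this; exact this
  have hgA1 : ∀ h, HasDerivAt (fun h => deriv φ (t + h)) (deriv (deriv φ) (t + h)) h := by
    intro h
    have := HasDerivAt.scomp h ((hd1diff (t + h)).hasDerivAt) (hadd h)
    simp at this; exact this
  have hg : ∀ h, HasDerivAt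
      (fun h : ℝ => φ (t + h) - φ t - h • deriv φ t - (h ^ 2 / 2) • deriv (deriv φ) t)
      (deriv φ (t + h) - deriv φ t - h • deriv (deriv φ) t) h := by
    intro h
    have h2' : HasDerivAt (fun h : ℝ => h • deriv φ t) (deriv φ t) h := by
      simpa using (hasDerivAt_id h).smul_const (deriv φ t)
    have h3' : HasDerivAt (fun h : ℝ => (h ^ 2 / 2) • deriv (deriv φ) t)
        (h • deriv (deriv φ) t) h := by
      have hp : HasDerivAt (fun h : ℝ => h ^ 2 / 2) h h := by
        have := (hasDerivAt_pow 2 h).div_const 2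
        rw [show ((2:ℕ):ℝ) * h ^ (2 - 1) / 2 = h by norm_num] at this
        exact this
      simpa using hp.smul_const (deriv (deriv φ) t)
    have := (((hgA h).sub_const (φ t)).sub h2').sub h3'
    exact this
  have hg1 : ∀ h, HasDerivAt
      (fun h : ℝ => deriv φ (t + h) - deriv φ t - h • deriv (deriv φ) t)
      (deriv (deriv φ) (t + h) - deriv (deriv φ) t) h := by
    intro h
    have h2' : HasDerivAt (fun h : ℝ => h • deriv (deriv φ) t) (deriv (deriv φ) t) h := by
      simpa using (hasDerivAt_id h).smul_const (deriv (deriv φ) t)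
    have := ((hgA1 h).sub_const (deriv φ t)).sub h2'
    exact this
  have hO : (fun h : ℝ => deriv (deriv φ) (t + h) - deriv (deriv φ) t) =O[𝓝 (0:ℝ)]
      (fun h : ℝ => h) := by
    have hd := (hd2diff t).isBigO_sub
    have ht : Filter.Tendsto (fun h : ℝ => t + h) (𝓝 0) (𝓝 t) := by
      have := (((continuous_const (y := t)).add continuous_id).tendsto (0:ℝ))
      simp at this; exact this
    simpa [Function.comp_def] using hd.comp_tendsto ht
  obtain ⟨C, hC0, hCb⟩ := hO.exists_nonneg
  rw [IsBigOWith, Metric.eventually_nhds_iff] at hCb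
  obtain ⟨ε, hε, hb⟩ := hCb
  have claim1 : ∀ h : ℝ, |h| < ε →
      ‖deriv φ (t + h) - deriv φ t - h • deriv (deriv φ) t‖ ≤ C * |h| * |h| := by
    intro h hh
    have key := Convex.norm_image_sub_le_of_norm_hasDerivWithin_le
      (f := fun s : ℝ => deriv φ (t + s) - deriv φ t - s • deriv (deriv φ) t)
      (f' := fun s : ℝ => deriv (deriv φ) (t + s) - deriv (deriv φ) t)
      (s := Set.uIcc 0 h) (C := C * |h|)
      (fun s _ => (hg1 s).hasDerivWithinAt)
      (fun s hs => by
        have habs : |s| ≤ |h| := by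
          rcases Set.mem_uIcc.1 hs with ⟨h1, h2⟩ | ⟨h1, h2⟩ <;>
            exact abs_le.2 ⟨by linarith [neg_abs_le h, le_abs_self h, abs_nonneg h],
              by linarith [neg_abs_le h, le_abs_self h, abs_nonneg h]⟩
        have hd : dist s 0 < ε := by
          rw [Real.dist_eq, sub_zero]; exact habs.trans_lt hh
        have hb2 := hb hd
        rw [Real.norm_eq_abs] at hb2
        exact le_trans hb2 (mul_le_mul_of_nonneg_left habs hC0))
      (convex_uIcc 0 h) Set.left_mem_uIcc Set.right_mem_uIcc
    simpa using key
  have claim2 : ∀ h : ℝ, |h| < ε →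
      ‖φ (t + h) - φ t - h • deriv φ t - (h ^ 2 / 2) • deriv (deriv φ) t‖
        ≤ C * |h| * |h| * |h| := by
    intro h hh
    have key := Convex.norm_image_sub_le_of_norm_hasDerivWithin_le
      (f := fun s : ℝ => φ (t + s) - φ t - s • deriv φ t - (s ^ 2 / 2) • deriv (deriv φ) t)
      (f' := fun s : ℝ => deriv φ (t + s) - deriv φ t - s • deriv (deriv φ) t)
      (s := Set.uIcc 0 h) (C := C * |h| * |h|)
      (fun s _ => (hg s).hasDerivWithinAt)
      (fun s hs => by
        have habs : |s| ≤ |h| := by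
          rcases Set.mem_uIcc.1 hs with ⟨h1, h2⟩ | ⟨h1, h2⟩ <;>
            exact abs_le.2 ⟨by linarith [neg_abs_le h, le_abs_self h, abs_nonneg h],
              by linarith [neg_abs_le h, le_abs_self h, abs_nonneg h]⟩
        calc ‖deriv φ (t + s) - deriv φ t - s • deriv (deriv φ) t‖
            ≤ C * |s| * |s| := claim1 s (habs.trans_lt hh)
          _ ≤ C * |h| * |h| := by
              nlinarith [mul_le_mul habs habs (abs_nonneg s) (abs_nonneg h)])
      (convex_uIcc 0 h) Set.left_mem_uIcc Set.right_mem_uIcc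
    simpa using key
  rw [Asymptotics.isBigO_iff]
  refine ⟨C, Metric.eventually_nhds_iff.2 ⟨ε, hε, fun h hh => ?_⟩⟩
  rw [Real.dist_eq, sub_zero] at hh
  calc ‖φ (t + h) - φ t - h • deriv φ t - (h ^ 2 / 2) • deriv (deriv φ) t‖
      ≤ C * |h| * |h| * |h| := claim2 h hh
    _ = C * ‖h ^ 3‖ := by rw [Real.norm_eq_abs, abs_pow]; ring




lemma neg_comp_aux {F : ℝ → E} (hF : F =O[𝓝 (0:ℝ)] fun h => h ^ 3) :
    (fun h : ℝ => F (-h)) =O[𝓝 (0:ℝ)] fun h => h ^ 3 := by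
  have hneg : Filter.Tendsto (fun h : ℝ => -h) (𝓝 (0:ℝ)) (𝓝 (0:ℝ)) := by
    simpa using (continuous_neg.tendsto (0:ℝ))
  have h3 : (fun h : ℝ => (-h) ^ 3) =O[𝓝 (0:ℝ)] fun h => h ^ 3 := by
    apply Asymptotics.isBigO_of_le
    intro x
    simp [Real.norm_eq_abs, abs_pow]
  exact ((hF.comp_tendsto hneg).congr_left fun h => rfl).trans h3

lemma diff3_aux (φ : ℝ → E) (hφ : ContDiff ℝ 3 φ) (t : ℝ) :
    (fun h : ℝ => φ (t + h) - φ (t - h) - (2 * h) • deriv φ t)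
      =O[𝓝 (0:ℝ)] fun h => h ^ 3 := by
  have h1 := taylor3_aux φ hφ t
  have h2 := neg_comp_aux h1
  refine (h1.sub h2).congr' (Filter.Eventually.of_forall fun h => ?_)
    (Filter.Eventually.of_forall fun h => rfl)
  show _ = φ (t + h) - φ (t - h) - (2 * h) • deriv φ t
  beta_reduce
  rw [show t + -h = t - h by ring, show ((-h : ℝ)) ^ 2 = h ^ 2 by ring]
  module

lemma sum2_aux (φ : ℝ → E) (hφ : ContDiff ℝ 3 φ) (t : ℝ) :
    (fun h : ℝ => φ (t + h) + φ (t - h) - (2 : ℝ) • φ t)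
      =O[𝓝 (0:ℝ)] fun h => h ^ 2 := by
  have hcube : (fun h : ℝ => h ^ 3) =O[𝓝 (0:ℝ)] fun h : ℝ => h ^ 2 := by
    rw [Asymptotics.isBigO_iff]
    refine ⟨1, Metric.eventually_nhds_iff.2 ⟨1, one_pos, fun h hh => ?_⟩⟩
    rw [Real.dist_eq, sub_zero] at hh
    rw [Real.norm_eq_abs, Real.norm_eq_abs, abs_pow, abs_pow, one_mul]
    exact pow_le_pow_of_le_one (abs_nonneg h) hh.le (by norm_num)
  have h1 := (taylor3_aux φ hφ t).trans hcube
  have h2 := (neg_comp_aux (taylor3_aux φ hφ t)).trans hcube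
  have hc : (fun h : ℝ => (h ^ 2) • deriv (deriv φ) t) =O[𝓝 (0:ℝ)] fun h : ℝ => h ^ 2 := by
    rw [Asymptotics.isBigO_iff]
    refine ⟨‖deriv (deriv φ) t‖, Filter.Eventually.of_forall fun x => ?_⟩
    rw [norm_smul, mul_comm]
  refine ((h1.add h2).add hc).congr' (Filter.Eventually.of_forall fun h => ?_)
    (Filter.Eventually.of_forall fun h => rfl)
  show _ = φ (t + h) + φ (t - h) - (2 : ℝ) • φ t
  beta_reduce
  rw [show t + -h = t - h by ring, show ((-h : ℝ)) ^ 2 = h ^ 2 by ring]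
  module



def lQ : Filter (ℝ × ℝ) := 𝓝[Set.Ioi (0:ℝ) ×ˢ Set.Ioi (0:ℝ)] ((0:ℝ), (0:ℝ))

lemma tendsto_fst_half : Filter.Tendsto (fun p : ℝ × ℝ => p.1 / 2) lQ (𝓝 (0:ℝ)) := by
  have h1 : Filter.Tendsto (fun p : ℝ × ℝ => p.1) lQ (𝓝 (0:ℝ)) :=
    (continuous_fst.tendsto ((0:ℝ), (0:ℝ))).mono_left nhdsWithin_le_nhds
  simpa using h1.div_const 2

lemma tendsto_snd_half : Filter.Tendsto (fun p : ℝ × ℝ => p.2 / 2) lQ (𝓝 (0:ℝ)) := by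
  have h1 : Filter.Tendsto (fun p : ℝ × ℝ => p.2) lQ (𝓝 (0:ℝ)) :=
    (continuous_snd.tendsto ((0:ℝ), (0:ℝ))).mono_left nhdsWithin_le_nhds
  simpa using h1.div_const 2

lemma bigO_div_fst (u : ℝ → E) (hu : u =O[𝓝 (0:ℝ)] fun h => h ^ 3) :
    (fun p : ℝ × ℝ => (1 / p.1) • u (p.1 / 2)) =O[lQ] fun p => p.1 ^ 2 + p.2 ^ 2 := by
  have hmem : ∀ᶠ p : ℝ × ℝ in lQ, p ∈ Set.Ioi (0:ℝ) ×ˢ Set.Ioi (0:ℝ) := self_mem_nhdsWithin (s := Set.Ioi (0:ℝ) ×ˢ Set.Ioi (0:ℝ))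
  obtain ⟨C, hC0, hCb⟩ := (hu.comp_tendsto tendsto_fst_half).exists_nonneg
  rw [IsBigOWith] at hCb
  rw [Asymptotics.isBigO_iff]
  refine ⟨C / 8, ?_⟩
  filter_upwards [hCb, hmem] with p hb hp
  have hp1 : 0 < p.1 := (Set.mem_prod.1 hp).1
  have hb' : ‖u (p.1 / 2)‖ ≤ C * (p.1 / 2) ^ 3 := by
    have := hb
    simp only [Function.comp_apply, Real.norm_eq_abs] at this
    rwa [abs_of_pos (by positivity)] at this
  rw [norm_smul, Real.norm_eq_abs, Real.norm_eq_abs, abs_of_pos (by positivity),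
    abs_of_nonneg (by positivity)]
  have heq : (1 / p.1) * (C * (p.1 / 2) ^ 3) = C * p.1 ^ 2 / 8 := by
    field_simp; ring
  calc (1 / p.1) * ‖u (p.1 / 2)‖ ≤ (1 / p.1) * (C * (p.1 / 2) ^ 3) :=
        mul_le_mul_of_nonneg_left hb' (by positivity)
    _ = C * p.1 ^ 2 / 8 := heq
    _ ≤ C / 8 * (p.1 ^ 2 + p.2 ^ 2) := by nlinarith [mul_nonneg hC0 (sq_nonneg p.2)]

lemma bigO_div_snd (u : ℝ → E) (hu : u =O[𝓝 (0:ℝ)] fun h => h ^ 3) :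
    (fun p : ℝ × ℝ => (1 / p.2) • u (p.2 / 2)) =O[lQ] fun p => p.1 ^ 2 + p.2 ^ 2 := by
  have hmem : ∀ᶠ p : ℝ × ℝ in lQ, p ∈ Set.Ioi (0:ℝ) ×ˢ Set.Ioi (0:ℝ) := self_mem_nhdsWithin (s := Set.Ioi (0:ℝ) ×ˢ Set.Ioi (0:ℝ))
  obtain ⟨C, hC0, hCb⟩ := (hu.comp_tendsto tendsto_snd_half).exists_nonneg
  rw [IsBigOWith] at hCb
  rw [Asymptotics.isBigO_iff]
  refine ⟨C / 8, ?_⟩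
  filter_upwards [hCb, hmem] with p hb hp
  have hp2 : 0 < p.2 := (Set.mem_prod.1 hp).2
  have hb' : ‖u (p.2 / 2)‖ ≤ C * (p.2 / 2) ^ 3 := by
    have := hb
    simp only [Function.comp_apply, Real.norm_eq_abs] at this
    rwa [abs_of_pos (by positivity)] at this
  rw [norm_smul, Real.norm_eq_abs, Real.norm_eq_abs, abs_of_pos (by positivity),
    abs_of_nonneg (by positivity)]
  have heq : (1 / p.2) * (C * (p.2 / 2) ^ 3) = C * p.2 ^ 2 / 8 := by
    field_simp; ring
  calc (1 / p.2) * ‖u (p.2 / 2)‖ ≤ (1 / p.2) * (C * (p.2 / 2) ^ 3) :=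
        mul_le_mul_of_nonneg_left hb' (by positivity)
    _ = C * p.2 ^ 2 / 8 := heq
    _ ≤ C / 8 * (p.1 ^ 2 + p.2 ^ 2) := by nlinarith [mul_nonneg hC0 (sq_nonneg p.1)]

lemma bigO_sq_fst (u : ℝ → E) (hu : u =O[𝓝 (0:ℝ)] fun h => h ^ 2) :
    (fun p : ℝ × ℝ => u (p.1 / 2)) =O[lQ] fun p => p.1 ^ 2 + p.2 ^ 2 := by
  refine (hu.comp_tendsto tendsto_fst_half).trans (Asymptotics.isBigO_of_le _ fun p => ?_)
  simp only [Function.comp_apply, Real.norm_eq_abs]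
  rw [abs_of_nonneg (by positivity), abs_of_nonneg (by positivity)]
  nlinarith [sq_nonneg p.1, sq_nonneg p.2]

lemma bigO_sq_snd (u : ℝ → E) (hu : u =O[𝓝 (0:ℝ)] fun h => h ^ 2) :
    (fun p : ℝ × ℝ => u (p.2 / 2)) =O[lQ] fun p => p.1 ^ 2 + p.2 ^ 2 := by
  refine (hu.comp_tendsto tendsto_snd_half).trans (Asymptotics.isBigO_of_le _ fun p => ?_)
  simp only [Function.comp_apply, Real.norm_eq_abs]
  rw [abs_of_nonneg (by positivity), abs_of_nonneg (by positivity)]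
  nlinarith [sq_nonneg p.1, sq_nonneg p.2]

end Aux

/-- The simple diamond scheme has local truncation error of second order in space
and time: substituting a smooth exact solution of `K z_t + L z_x = ∇S(z)` into the
scheme leaves a residual of size `O(Δx² + Δt²)` as `(Δx, Δt) → (0⁺, 0⁺)`. -/
theorem simple_diamond_truncation_error (n : ℕ) (hn : 1 ≤ n)
    (K L : Matrix (Fin n) (Fin n) ℝ) (hK : Kᵀ = -K) (hL : Lᵀ = -L)
    (S : (Fin n → ℝ) → ℝ) (gradS : (Fin n → ℝ) → (Fin n → ℝ))
    (hS2 : ContDiff ℝ 2 S)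
    (hgrad : ∀ y, HasFDerivAt S
      (∑ i, gradS y i • (ContinuousLinearMap.proj i : (Fin n → ℝ) →L[ℝ] ℝ)) y)
    (z : ℝ × ℝ → (Fin n → ℝ)) (hz : ContDiff ℝ 3 z)
    (hpde : ∀ x t : ℝ,
      K.mulVec (deriv (fun s : ℝ => z (x, s)) t)
        + L.mulVec (deriv (fun s : ℝ => z (s, t)) x) = gradS (z (x, t)))
    (x₀ t₀ : ℝ) :
    (fun p : ℝ × ℝ =>
        (1 / p.2) • K.mulVec (z (x₀, t₀ + p.2 / 2) - z (x₀, t₀ - p.2 / 2))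
        + (1 / p.1) • L.mulVec (z (x₀ + p.1 / 2, t₀) - z (x₀ - p.1 / 2, t₀))
        - gradS ((1 / 4 : ℝ) • (z (x₀, t₀ + p.2 / 2) + z (x₀ + p.1 / 2, t₀)
            + z (x₀, t₀ - p.2 / 2) + z (x₀ - p.1 / 2, t₀))))
      =O[𝓝[Set.Ioi (0 : ℝ) ×ˢ Set.Ioi (0 : ℝ)] ((0 : ℝ), (0 : ℝ))]
      (fun p : ℝ × ℝ => p.1 ^ 2 + p.2 ^ 2) := by
  set lQ := 𝓝[Set.Ioi (0 : ℝ) ×ˢ Set.Ioi (0 : ℝ)] ((0 : ℝ), (0 : ℝ)) with hlQ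
  have hmem : ∀ᶠ p : ℝ × ℝ in lQ, p ∈ Set.Ioi (0:ℝ) ×ˢ Set.Ioi (0:ℝ) :=
    self_mem_nhdsWithin
  have hφ3 : ContDiff ℝ 3 (fun s : ℝ => z (x₀, s)) :=
    hz.comp (contDiff_const.prodMk contDiff_id)
  have hψ3 : ContDiff ℝ 3 (fun s : ℝ => z (s, t₀)) :=
    hz.comp (contDiff_id.prodMk contDiff_const)
  set a := deriv (fun s : ℝ => z (x₀, s)) t₀ with ha
  set b := deriv (fun s : ℝ => z (s, t₀)) x₀ with hb
  have hpde0 : K.mulVec a + L.mulVec b = gradS (z (x₀, t₀)) := hpde x₀ t₀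
  -- The time-difference error term
  have hE1 : (fun p : ℝ × ℝ =>
      (1 / p.2) • (z (x₀, t₀ + p.2 / 2) - z (x₀, t₀ - p.2 / 2)) - a) =O[lQ]
      (fun p : ℝ × ℝ => p.1 ^ 2 + p.2 ^ 2) := by
    have h0 := bigO_div_snd _ (diff3_aux (fun s : ℝ => z (x₀, s)) hφ3 t₀)
    refine h0.congr' ?_ (Filter.Eventually.of_forall fun _ => rfl)
    filter_upwards [hmem] with p hp
    have hp2 : 0 < p.2 := (Set.mem_prod.1 hp).2
    show (1 / p.2) • (z (x₀, t₀ + p.2 / 2) - z (x₀, t₀ - p.2 / 2) - (2 * (p.2 / 2)) • a) = _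
    rw [smul_sub, smul_smul, show (1 / p.2) * (2 * (p.2 / 2)) = 1 by field_simp, one_smul]
  have hE2 : (fun p : ℝ × ℝ =>
      (1 / p.1) • (z (x₀ + p.1 / 2, t₀) - z (x₀ - p.1 / 2, t₀)) - b) =O[lQ]
      (fun p : ℝ × ℝ => p.1 ^ 2 + p.2 ^ 2) := by
    have h0 := bigO_div_fst _ (diff3_aux (fun s : ℝ => z (s, t₀)) hψ3 x₀)
    refine h0.congr' ?_ (Filter.Eventually.of_forall fun _ => rfl)
    filter_upwards [hmem] with p hp
    have hp1 : 0 < p.1 := (Set.mem_prod.1 hp).1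
    show (1 / p.1) • (z (x₀ + p.1 / 2, t₀) - z (x₀ - p.1 / 2, t₀) - (2 * (p.1 / 2)) • b) = _
    rw [smul_sub, smul_smul, show (1 / p.1) * (2 * (p.1 / 2)) = 1 by field_simp, one_smul]
  -- the average
  set Avg : ℝ × ℝ → (Fin n → ℝ) := fun p =>
    (1 / 4 : ℝ) • (z (x₀, t₀ + p.2 / 2) + z (x₀ + p.1 / 2, t₀)
      + z (x₀, t₀ - p.2 / 2) + z (x₀ - p.1 / 2, t₀)) with hAvg
  have havg : (fun p : ℝ × ℝ => Avg p - z (x₀, t₀)) =O[lQ]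
      (fun p : ℝ × ℝ => p.1 ^ 2 + p.2 ^ 2) := by
    have h1 := bigO_sq_snd _ (sum2_aux (fun s : ℝ => z (x₀, s)) hφ3 t₀)
    have h2 := bigO_sq_fst _ (sum2_aux (fun s : ℝ => z (s, t₀)) hψ3 x₀)
    have h3 := (h1.add h2).const_smul_left (1 / 4 : ℝ)
    refine h3.congr' (Filter.Eventually.of_forall fun p => ?_)
      (Filter.Eventually.of_forall fun _ => rfl)
    show (1 / 4 : ℝ) • ((z (x₀, t₀ + p.2 / 2) + z (x₀, t₀ - p.2 / 2) - (2:ℝ) • z (x₀, t₀))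
        + (z (x₀ + p.1 / 2, t₀) + z (x₀ - p.1 / 2, t₀) - (2:ℝ) • z (x₀, t₀))) = _
    simp only [hAvg]
    ext i
    simp only [Pi.smul_apply, Pi.add_apply, Pi.sub_apply, smul_eq_mul]
    ring
  have hW0 : Filter.Tendsto (fun p : ℝ × ℝ => p.1 ^ 2 + p.2 ^ 2) lQ (𝓝 (0:ℝ)) := by
    have h := ((continuous_fst.pow 2).add (continuous_snd.pow 2)).tendsto ((0:ℝ), (0:ℝ))
    have h2 := h.mono_left (nhdsWithin_le_nhds (s := Set.Ioi (0:ℝ) ×ˢ Set.Ioi (0:ℝ)))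
    simp at h2; exact h2
  have htendAvg : Filter.Tendsto Avg lQ (𝓝 (z (x₀, t₀))) := by
    have h1 := havg.trans_tendsto hW0
    have h2 := h1.add_const (z (x₀, t₀))
    simpa using h2
  -- Lipschitz bound for gradS near z (x₀, t₀)
  have hgradC : ContDiff ℝ 1 gradS := by
    have hfd : ContDiff ℝ 1 (fderiv ℝ S) := hS2.fderiv_right (by norm_num)
    have hgeq : ∀ y j, gradS y j = fderiv ℝ S y (Pi.single j 1) := by
      intro y j
      rw [(hgrad y).fderiv]
      simp [ContinuousLinearMap.proj_apply, Pi.single_apply]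
    have h2 : ContDiff ℝ 1 (fun y => fun j : Fin n => fderiv ℝ S y (Pi.single j 1)) :=
      contDiff_pi.2 fun j => hfd.clm_apply contDiff_const
    have : gradS = fun y => fun j : Fin n => fderiv ℝ S y (Pi.single j 1) :=
      funext fun y => funext fun j => hgeq y j
    rw [this]; exact h2
  obtain ⟨Klip, U, hU, hlip⟩ := hgradC.contDiffAt.exists_lipschitzOnWith
    (x := z (x₀, t₀))
  have hgradO : (fun p : ℝ × ℝ => gradS (z (x₀, t₀)) - gradS (Avg p)) =O[lQ]
      (fun p : ℝ × ℝ => p.1 ^ 2 + p.2 ^ 2) := by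
    have hz₀U : z (x₀, t₀) ∈ U := mem_of_mem_nhds hU
    have hev : ∀ᶠ p in lQ, Avg p ∈ U := htendAvg.eventually_mem hU
    have hlin : (fun p : ℝ × ℝ => gradS (z (x₀, t₀)) - gradS (Avg p)) =O[lQ]
        (fun p => Avg p - z (x₀, t₀)) := by
      rw [isBigO_iff]
      refine ⟨Klip, ?_⟩
      filter_upwards [hev] with p hpU
      have hd := hlip.dist_le_mul _ hz₀U _ hpU
      rw [dist_eq_norm, dist_eq_norm] at hd
      calc ‖gradS (z (x₀, t₀)) - gradS (Avg p)‖ ≤ Klip * ‖z (x₀, t₀) - Avg p‖ := hd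
        _ = Klip * ‖Avg p - z (x₀, t₀)‖ := by rw [norm_sub_rev]
    exact hlin.trans havg
  -- continuous linear maps for K and L
  set Kc : (Fin n → ℝ) →L[ℝ] (Fin n → ℝ) := LinearMap.toContinuousLinearMap K.mulVecLin
    with hKc
  set Lc : (Fin n → ℝ) →L[ℝ] (Fin n → ℝ) := LinearMap.toContinuousLinearMap L.mulVecLin
    with hLc
  have hKE : (fun p : ℝ × ℝ => K.mulVec
      ((1 / p.2) • (z (x₀, t₀ + p.2 / 2) - z (x₀, t₀ - p.2 / 2)) - a)) =O[lQ]
      (fun p : ℝ × ℝ => p.1 ^ 2 + p.2 ^ 2) := by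
    refine IsBigO.congr_left ((Kc.isBigO_comp _ lQ).trans hE1) fun p => ?_
    simp [hKc, Matrix.mulVecLin_apply]
  have hLE : (fun p : ℝ × ℝ => L.mulVec
      ((1 / p.1) • (z (x₀ + p.1 / 2, t₀) - z (x₀ - p.1 / 2, t₀)) - b)) =O[lQ]
      (fun p : ℝ × ℝ => p.1 ^ 2 + p.2 ^ 2) := by
    refine IsBigO.congr_left ((Lc.isBigO_comp _ lQ).trans hE2) fun p => ?_
    simp [hLc, Matrix.mulVecLin_apply]
  refine IsBigO.congr_left ((hKE.add hLE).add hgradO) fun p => ?_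
  have hKm : K.mulVec ((1 / p.2) • (z (x₀, t₀ + p.2 / 2) - z (x₀, t₀ - p.2 / 2)) - a)
      = (1 / p.2) • K.mulVec (z (x₀, t₀ + p.2 / 2) - z (x₀, t₀ - p.2 / 2)) - K.mulVec a := by
    rw [Matrix.mulVec_sub, Matrix.mulVec_smul]
  have hLm : L.mulVec ((1 / p.1) • (z (x₀ + p.1 / 2, t₀) - z (x₀ - p.1 / 2, t₀)) - b)
      = (1 / p.1) • L.mulVec (z (x₀ + p.1 / 2, t₀) - z (x₀ - p.1 / 2, t₀)) - L.mulVec b := by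
    rw [Matrix.mulVec_sub, Matrix.mulVec_smul]
  rw [hKm, hLm, ← hpde0]
  abel
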